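/- Let $p$ be a prime and $r \geq 2$ an integer such that $p$ divides $r$. Let $\mathcal{F} \subseteq (\mathbb{Z}_p)^n$ be a subset with the property: whenever $b_1, \ldots, b_r \in \mathcal{F}$ are vectors such that $b_i \neq b_j$ for some $1 \leq i < j \leq r$, then $b_1 + \cdots + b_r \neq 0$. Then $|\mathcal{F}| \leq r \, p^{\left(1 - \frac{(r-2)^2}{2 r^2 \ln p}\right) n}$. -/

import Mathlib

set_option maxHeartbeats 1000000
open Finset MvPolynomial Real

section ZeroSumFreeAux

set_option linter.unusedSectionVars false

lemma exists_big_support {K : Type*} [Field K] [Fintype K] [DecidableEq K] {ι : Type*} [Fintype ι]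
    [DecidableEq ι] (W : Submodule K (ι → K)) :
    ∃ h ∈ W, Module.finrank K W ≤ (Finset.univ.filter (fun i => h i ≠ 0)).card := by
  classical
  obtain ⟨h₀, -, hmax⟩ := Finset.exists_max_image (Finset.univ : Finset W)
    (fun h => (Finset.univ.filter (fun i => (h : ι → K) i ≠ 0)).card)
    ⟨⟨0, W.zero_mem⟩, Finset.mem_univ _⟩
  refine ⟨h₀, h₀.2, ?_⟩
  by_contra hlt
  push_neg at hlt
  set s := Finset.univ.filter (fun i => (h₀ : ι → K) i ≠ 0) with hs
  have hρ : ¬ Function.Injective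
      ((LinearMap.funLeft K K (Subtype.val : ↥s → ι)).comp W.subtype) := by
    intro hinj
    have := LinearMap.finrank_le_finrank_of_injective hinj
    rw [Module.finrank_pi] at this
    simp only [Fintype.card_coe] at this
    omega
  rw [injective_iff_map_eq_zero] at hρ
  push_neg at hρ
  obtain ⟨g, hg0, hgne⟩ := hρ
  have hgs : ∀ i ∈ s, (g : ι → K) i = 0 := by
    intro i hi
    have := congrFun hg0 ⟨i, hi⟩
    simpa using this
  have hgex : ∃ j, (g : ι → K) j ≠ 0 := by
    by_contra hc
    push_neg at hc
    exact hgne (Subtype.ext (funext fun i => hc i))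
  obtain ⟨j, hj⟩ := hgex
  have hjs : j ∉ s := fun hjs => hj (hgs j hjs)
  have hsub : s ⊂ Finset.univ.filter (fun i => ((h₀ + g : W) : ι → K) i ≠ 0) := by
    constructor
    · intro i hi
      simp only [Finset.mem_filter, Finset.mem_univ, true_and]
      have : (g : ι → K) i = 0 := hgs i hi
      have hi' : (h₀ : ι → K) i ≠ 0 := by simpa [hs] using hi
      simp [Submodule.coe_add, Pi.add_apply, this, hi']
    · intro hcon
      have : j ∈ s := hcon (by
        simp only [Finset.mem_filter, Finset.mem_univ, true_and]
        have hj0 : (h₀ : ι → K) j = 0 := by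
          by_contra hcc
          exact hjs (by simp [hs, hcc])
        simp [Submodule.coe_add, Pi.add_apply, hj0, hj])
      exact hjs this
  have := hmax (h₀ + g) (Finset.mem_univ _)
  have hcard := Finset.card_lt_card hsub
  omega


section DiagTensor
variable {K : Type*} [Field K] [Fintype K] [DecidableEq K]

lemma diag_base {V : Type*} [DecidableEq V] (A : Finset V)
    (c : V → K) (hc : ∀ a ∈ A, c a ≠ 0)
    (J : Fin 2 → Type) [∀ i, Fintype (J i)]
    (f : (i : Fin 2) → J i → V → K)
    (g : (i : Fin 2) → J i → (Fin 2 → V) → K)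
    (hg : ∀ i j x v, g i j (Function.update x i v) = g i j x)
    (hdecomp : ∀ x : Fin 2 → V, (∀ i, x i ∈ A) →
      (if ∀ i, x i = x 0 then c (x 0) else 0) = ∑ i, ∑ j, f i j (x i) * g i j x) :
    A.card ≤ ∑ i, Fintype.card (J i) := by
  classical
  set M : Matrix ↥A ↥A K := fun a b => if (b : V) = (a : V) then c a else 0 with hM
  have hMdiag : M = Matrix.diagonal (fun a : ↥A => c a) := by
    funext a b
    rw [hM]
    simp only [Matrix.diagonal]
    by_cases h : (b : V) = (a : V)
    · have : b = a := Subtype.ext h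
      subst this; simp
    · have : ¬ (a = b) := fun hh => h (by rw [hh])
      simp [h, Matrix.of_apply, this]
  have hunit : IsUnit M := by
    rw [hMdiag, Matrix.isUnit_iff_isUnit_det, Matrix.det_diagonal]
    exact isUnit_iff_ne_zero.mpr (Finset.prod_ne_zero_iff.mpr fun a _ => hc a a.2)
  have hrank : M.rank = Fintype.card ↥A := Matrix.rank_of_isUnit M hunit
  set U : Matrix ↥A (J 0 ⊕ J 1) K := fun a s =>
    Sum.elim (fun j => f 0 j (a : V)) (fun j => g 1 j (fun _ => (a : V))) s with hU
  set W : Matrix (J 0 ⊕ J 1) ↥A K := fun s b =>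
    Sum.elim (fun j => g 0 j (fun _ => (b : V))) (fun j => f 1 j (b : V)) s with hW
  have hMUW : M = U * W := by
    funext a b
    have hx : ∀ i : Fin 2, (![(a : V), (b : V)]) i ∈ A := by
      intro i; fin_cases i <;> simp [a.2, b.2]
    have hd := hdecomp ![(a : V), (b : V)] hx
    rw [Fin.sum_univ_two] at hd
    have hcond : (∀ i : Fin 2, (![(a : V), (b : V)]) i = (![(a : V), (b : V)]) 0)
        ↔ ((b : V) = (a : V)) := by
      rw [Fin.forall_fin_two]; simp
    have hg0 : ∀ j, g 0 j ![(a : V), (b : V)] = g 0 j (fun _ => (b : V)) := by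
      intro j
      have : ![(a : V), (b : V)] = Function.update (fun _ => (b : V)) 0 (a : V) := by
        funext i; fin_cases i <;> simp
      rw [this, hg]
    have hg1 : ∀ j, g 1 j ![(a : V), (b : V)] = g 1 j (fun _ => (a : V)) := by
      intro j
      have : ![(a : V), (b : V)] = Function.update (fun _ => (a : V)) 1 (b : V) := by
        funext i; fin_cases i <;> simp
      rw [this, hg]
    have key : (if (b : V) = (a : V) then c (a : V) else 0)
        = ∑ j : J 0, f 0 j (a : V) * g 0 j (fun _ => (b : V))
          + ∑ j : J 1, g 1 j (fun _ => (a : V)) * f 1 j (b : V) := by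
      by_cases hba : (b : V) = (a : V)
      · rw [if_pos (hcond.mpr hba)] at hd
        rw [if_pos hba]
        simp only [Matrix.cons_val_zero] at hd
        rw [hd]
        congr 1
        · exact Finset.sum_congr rfl fun j _ => by rw [hg0]
        · refine Finset.sum_congr rfl fun j _ => ?_
          simp only [Matrix.cons_val_one, Matrix.head_cons, Matrix.cons_val_zero]
          rw [hg1, mul_comm]
      · rw [if_neg (fun hcc => hba (hcond.mp hcc))] at hd
        rw [if_neg hba]
        rw [hd]
        congr 1
        · exact Finset.sum_congr rfl fun j _ => by simp only [Matrix.cons_val_zero]; rw [hg0]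
        · refine Finset.sum_congr rfl fun j _ => ?_
          simp only [Matrix.cons_val_one, Matrix.head_cons, Matrix.cons_val_zero]
          rw [hg1, mul_comm]
    show M a b = (U * W) a b
    rw [hM]
    rw [Matrix.mul_apply]
    simp only [hU, hW]
    rw [Fintype.sum_sum_type]
    simp only [Sum.elim_inl, Sum.elim_inr]
    exact key
  have hle : M.rank ≤ Fintype.card (J 0 ⊕ J 1) := by
    rw [hMUW]
    exact le_trans (Matrix.rank_mul_le_left U W) (Matrix.rank_le_card_width U)
  rw [hrank, Fintype.card_sum] at hle
  rw [Fin.sum_univ_two]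
  rwa [Fintype.card_coe] at hle



lemma ite_allEq {V : Type*} [DecidableEq V] {m : ℕ} (x : Fin m → V) (c : V → K)
    (z w : Fin m) :
    (if ∀ i, x i = x z then c (x z) else 0) = (if ∀ i, x i = x w then c (x w) else 0) := by
  by_cases h : ∀ i, x i = x z
  · have hw : ∀ i, x i = x w := fun i => (h i).trans (h w).symm
    rw [if_pos h, if_pos hw, h w]
  · have hw : ¬ ∀ i, x i = x w := by
      intro hw
      exact h fun i => (hw i).trans (hw z).symm
    rw [if_neg h, if_neg hw]

lemma diag_tensor_bound : ∀ (k : ℕ), 2 ≤ k → ∀ {V : Type*} [DecidableEq V] (A : Finset V)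
      (c : V → K), (∀ a ∈ A, c a ≠ 0) → ∀ (J : Fin k → Type) [∀ i, Fintype (J i)]
      (f : (i : Fin k) → J i → V → K)
      (g : (i : Fin k) → J i → (Fin k → V) → K),
      (∀ i j x v, g i j (Function.update x i v) = g i j x) →
      ∀ (z : Fin k),
      (∀ x : Fin k → V, (∀ i, x i ∈ A) →
        (if ∀ i, x i = x z then c (x z) else 0) = ∑ i, ∑ j, f i j (x i) * g i j x) →
      A.card ≤ ∑ i, Fintype.card (J i) := by
  intro k hk
  induction k, hk using Nat.le_induction with
  | base =>
    intro V _ A c hc J _ f g hg z hd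
    refine diag_base A c hc J f g hg ?_
    intro x hx
    rw [ite_allEq x c 0 z]
    exact hd x hx
  | succ k hk IH =>
    intro V _ A c hc J instJ f g hg z hdecompz
    classical
    set z₀ : Fin k := ⟨0, by omega⟩ with hz₀
    have hdecomp : ∀ x : Fin (k+1) → V, (∀ i, x i ∈ A) →
        (if ∀ i, x i = x z₀.castSucc then c (x z₀.castSucc) else 0)
          = ∑ i, ∑ j, f i j (x i) * g i j x := by
      intro x hx
      rw [ite_allEq x c z₀.castSucc z]
      exact hdecompz x hx
    set lst := Fin.last k with hlst
    let φ : (↥A → K) →ₗ[K] (J lst → K) :=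
      { toFun := fun h j => ∑ a : ↥A, h a * f lst j (a : V)
        map_add' := by
          intro h1 h2; funext j
          simp [add_mul, Finset.sum_add_distrib]
        map_smul' := by
          intro r h; funext j
          simp [Finset.mul_sum, mul_assoc] }
    obtain ⟨h, hker, hhcard⟩ := exists_big_support (LinearMap.ker φ)
    have hφh : ∀ j, ∑ a : ↥A, h a * f lst j (a : V) = 0 := by
      intro j
      have : φ h = 0 := LinearMap.mem_ker.mp hker
      exact congrFun this j
    set A' : Finset V := (Finset.univ.filter (fun a : ↥A => h a ≠ 0)).image Subtype.val
      with hA'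
    have hcardA' : A'.card = (Finset.univ.filter (fun a : ↥A => h a ≠ 0)).card :=
      Finset.card_image_of_injective _ Subtype.val_injective
    have hA'sub : A' ⊆ A := by
      intro v hv
      obtain ⟨a, -, rfl⟩ := Finset.mem_image.mp hv
      exact a.2
    have hmemA' : ∀ v ∈ A', ∀ (hv : v ∈ A), h ⟨v, hv⟩ ≠ 0 := by
      intro v hv hva
      obtain ⟨a, ha, rfl⟩ := Finset.mem_image.mp hv
      have : a = ⟨(a : V), hva⟩ := Subtype.ext rfl
      rw [← this]
      exact (Finset.mem_filter.mp ha).2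
    set H : V → K := fun v => if hv : v ∈ A then h ⟨v, hv⟩ else 0 with hH
    have hHne : ∀ v ∈ A', H v ≠ 0 := by
      intro v hv
      have hva : v ∈ A := hA'sub hv
      rw [hH]
      simp only [dif_pos hva]
      exact hmemA' v hv hva
    set f' : (i : Fin k) → J i.castSucc → V → K := fun i j => f i.castSucc j with hf'
    set g' : (i : Fin k) → J i.castSucc → (Fin k → V) → K :=
      fun i j x => ∑ a : ↥A, h a * g i.castSucc j (Fin.snoc x (a : V)) with hg'def
    have hg'inv : ∀ i j x v, g' i j (Function.update x i v) = g' i j x := by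
      intro i j x v
      rw [hg'def]
      refine Finset.sum_congr rfl fun a _ => ?_
      congr 1
      rw [Fin.snoc_update, hg]
    have hdecomp' : ∀ x : Fin k → V, (∀ i, x i ∈ A') →
        (if ∀ i, x i = x z₀ then H (x z₀) * c (x z₀) else 0)
          = ∑ i, ∑ j, f' i j (x i) * g' i j x := by
      intro x hx
      have x0A : x z₀ ∈ A := hA'sub (hx z₀)
      have hxall : ∀ a : ↥A, ∀ i : Fin (k+1), (Fin.snoc x (a : V) : Fin (k+1) → V) i ∈ A := by
        intro a i
        induction i using Fin.lastCases with
        | last => rw [Fin.snoc_last]; exact a.2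
        | cast i => rw [Fin.snoc_castSucc]; exact hA'sub (hx i)
      have h0 : ∀ a : ↥A, (Fin.snoc x (a : V) : Fin (k+1) → V) z₀.castSucc = x z₀ :=
        fun a => Fin.snoc_castSucc _ _ _
      have hcond : ∀ a : ↥A,
          (∀ i : Fin (k+1), (Fin.snoc x (a : V) : Fin (k+1) → V) i
            = (Fin.snoc x (a : V) : Fin (k+1) → V) z₀.castSucc)
          ↔ ((∀ i : Fin k, x i = x z₀) ∧ (a : V) = x z₀) := by
        intro a
        constructor
        · intro hcc
          constructor
          · intro i
            have := hcc i.castSucc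
            rwa [Fin.snoc_castSucc, h0] at this
          · have := hcc (Fin.last k)
            rwa [Fin.snoc_last, h0] at this
        · rintro ⟨h1, h2⟩ i
          rw [h0]
          induction i using Fin.lastCases with
          | last => rw [Fin.snoc_last]; exact h2
          | cast i => rw [Fin.snoc_castSucc]; exact h1 i
      have hS1 : ∑ a : ↥A, h a *
          (if ∀ i : Fin (k+1), (Fin.snoc x (a : V) : Fin (k+1) → V) i
              = (Fin.snoc x (a : V) : Fin (k+1) → V) z₀.castSucc
            then c ((Fin.snoc x (a : V) : Fin (k+1) → V) z₀.castSucc) else 0)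
          = (if ∀ i : Fin k, x i = x z₀ then H (x z₀) * c (x z₀) else 0) := by
        have step : ∀ a : ↥A, h a *
            (if ∀ i : Fin (k+1), (Fin.snoc x (a : V) : Fin (k+1) → V) i
                = (Fin.snoc x (a : V) : Fin (k+1) → V) z₀.castSucc
              then c ((Fin.snoc x (a : V) : Fin (k+1) → V) z₀.castSucc) else 0)
            = h a * (if ((∀ i : Fin k, x i = x z₀) ∧ (a : V) = x z₀) then c (x z₀) else 0) := by
          intro a
          by_cases hcc : ∀ i : Fin (k+1), (Fin.snoc x (a : V) : Fin (k+1) → V) i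
              = (Fin.snoc x (a : V) : Fin (k+1) → V) z₀.castSucc
          · rw [if_pos hcc, if_pos ((hcond a).mp hcc), h0]
          · rw [if_neg hcc, if_neg (fun hx2 => hcc ((hcond a).mpr hx2))]
        rw [Finset.sum_congr rfl fun a _ => step a]
        by_cases hall : ∀ i : Fin k, x i = x z₀
        · rw [if_pos hall]
          have hterm : ∀ a : ↥A, h a * (if ((∀ i : Fin k, x i = x z₀) ∧ (a : V) = x z₀)
              then c (x z₀) else 0)
              = if a = ⟨x z₀, x0A⟩ then h a * c (x z₀) else 0 := by
            intro a
            by_cases hax : a = ⟨x z₀, x0A⟩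
            · subst hax
              rw [if_pos ⟨hall, rfl⟩, if_pos rfl]
            · have hno : ¬ ((∀ i : Fin k, x i = x z₀) ∧ (a : V) = x z₀) := by
                rintro ⟨-, h2⟩
                exact hax (Subtype.ext h2)
              rw [if_neg hno, if_neg hax, mul_zero]
          rw [Finset.sum_congr rfl fun a _ => hterm a]
          rw [Finset.sum_ite_eq' Finset.univ (⟨x z₀, x0A⟩ : ↥A) (fun a => h a * c (x z₀))]
          rw [if_pos (Finset.mem_univ _)]
          congr 1
          rw [hH]
          simp only [dif_pos x0A]
        · rw [if_neg hall]
          rw [Finset.sum_congr rfl (fun a _ => ?_), Finset.sum_const_zero]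
          have hno : ¬ ((∀ i : Fin k, x i = x z₀) ∧ (a : V) = x z₀) := fun hcc => hall hcc.1
          rw [if_neg hno, mul_zero]
      have hS2 : ∑ a : ↥A, h a *
          (if ∀ i : Fin (k+1), (Fin.snoc x (a : V) : Fin (k+1) → V) i
              = (Fin.snoc x (a : V) : Fin (k+1) → V) z₀.castSucc
            then c ((Fin.snoc x (a : V) : Fin (k+1) → V) z₀.castSucc) else 0)
          = ∑ i, ∑ j, f' i j (x i) * g' i j x := by
        have expand : ∀ a : ↥A, h a *
            (if ∀ i : Fin (k+1), (Fin.snoc x (a : V) : Fin (k+1) → V) i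
                = (Fin.snoc x (a : V) : Fin (k+1) → V) z₀.castSucc
              then c ((Fin.snoc x (a : V) : Fin (k+1) → V) z₀.castSucc) else 0)
            = (∑ i : Fin k, ∑ j : J i.castSucc,
                h a * (f i.castSucc j (x i) * g i.castSucc j (Fin.snoc x (a : V))))
              + ∑ j : J lst, (h a * f lst j (a : V)) * g lst j (Fin.snoc x (x z₀)) := by
          intro a
          rw [hdecomp (Fin.snoc x (a : V)) (hxall a)]
          rw [Fin.sum_univ_castSucc]
          rw [mul_add, Finset.mul_sum]
          congr 1
          · refine Finset.sum_congr rfl fun i _ => ?_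
            rw [Finset.mul_sum]
            refine Finset.sum_congr rfl fun j _ => ?_
            rw [Fin.snoc_castSucc]
          · rw [Finset.mul_sum]
            refine Finset.sum_congr rfl fun j _ => ?_
            have hgg : g (Fin.last k) j (Fin.snoc x (a : V))
                = g (Fin.last k) j (Fin.snoc x (x z₀)) := by
              conv_lhs => rw [show (Fin.snoc x (a : V) : Fin (k+1) → V)
                = Function.update (Fin.snoc x (x z₀) : Fin (k+1) → V) (Fin.last k) (a : V)
                from (Fin.update_snoc_last _ _ _).symm]
              rw [hg]
            simp only [hlst, Fin.snoc_last]
            rw [hgg, mul_assoc]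
        rw [Finset.sum_congr rfl fun a _ => expand a]
        rw [Finset.sum_add_distrib]
        have hzero : ∑ a : ↥A, ∑ j : J lst,
            (h a * f lst j (a : V)) * g lst j (Fin.snoc x (x z₀)) = 0 := by
          rw [Finset.sum_comm]
          refine Finset.sum_eq_zero fun j _ => ?_
          rw [← Finset.sum_mul, hφh j, zero_mul]
        rw [hzero, add_zero]
        rw [Finset.sum_comm]
        refine Finset.sum_congr rfl fun i _ => ?_
        rw [Finset.sum_comm]
        refine Finset.sum_congr rfl fun j _ => ?_
        rw [hg'def, hf']
        simp only
        rw [Finset.mul_sum]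
        refine Finset.sum_congr rfl fun a _ => ?_
        ring
      exact hS1.symm.trans hS2
    have hIH := IH A' (fun v => H v * c v)
      (fun v hv => mul_ne_zero (hHne v hv) (hc v (hA'sub hv)))
      (fun i => J i.castSucc) f' g' hg'inv z₀ hdecomp'
    have hrank : Fintype.card ↥A ≤ Fintype.card (J lst) +
        (Finset.univ.filter (fun a : ↥A => h a ≠ 0)).card := by
      have h1 := LinearMap.finrank_range_add_finrank_ker φ
      have h2 : Module.finrank K (↥A → K) = Fintype.card ↥A := by
        rw [Module.finrank_pi]
      have h3 : Module.finrank K (LinearMap.range φ) ≤ Fintype.card (J lst) := by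
        have := Submodule.finrank_le (LinearMap.range φ)
        rwa [Module.finrank_pi] at this
      omega
    rw [Fin.sum_univ_castSucc]
    have hAcoe : A.card = Fintype.card ↥A := (Fintype.card_coe A).symm
    have hIH' : A'.card ≤ ∑ i : Fin k, Fintype.card (J i.castSucc) := hIH
    have hlst2 : Fintype.card (J lst) = Fintype.card (J (Fin.last k)) := rfl
    omega


end DiagTensor

theorem card_le_p_mul (p : ℕ) (hp : p.Prime) (n : ℕ) (F : Finset (Fin n → ZMod p))
    (hF : ∀ b : Fin p → (Fin n → ZMod p), (∀ i, b i ∈ F) →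
      (∃ i j : Fin p, i < j ∧ b i ≠ b j) → ∑ i, b i ≠ 0) :
    F.card ≤ p *
      (Finset.univ.filter
        (fun a : Fin n → Fin p => p * (∑ t, (a t : ℕ)) ≤ (p-1) * n)).card := by
  classical
  haveI : Fact p.Prime := ⟨hp⟩
  have hp2 : 2 ≤ p := hp.two_le
  set B : Finset (Fin n → Fin p) :=
    Finset.univ.filter (fun a : Fin n → Fin p => p * (∑ t, (a t : ℕ)) ≤ (p-1) * n) with hB
  set P : MvPolynomial (Fin p × Fin n) (ZMod p) :=
    ∏ t : Fin n, (1 - (∑ i : Fin p, X (i, t)) ^ (p - 1)) with hP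
  -- evaluation of P is the indicator of "sum equals zero"
  have heval : ∀ b : Fin p → Fin n → ZMod p,
      MvPolynomial.eval (fun q : Fin p × Fin n => b q.1 q.2) P
        = if (∑ i, b i) = 0 then 1 else 0 := by
    intro b
    rw [hP, map_prod]
    have hfac : ∀ t : Fin n,
        MvPolynomial.eval (fun q : Fin p × Fin n => b q.1 q.2)
          (1 - (∑ i : Fin p, X (i, t)) ^ (p - 1))
        = if (∑ i, b i) t = 0 then 1 else 0 := by
      intro t
      rw [map_sub, map_one, map_pow, map_sum]
      simp only [MvPolynomial.eval_X]
      have hsa : (∑ i : Fin p, b i t) = (∑ i, b i) t := by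
        rw [Finset.sum_apply]
      rw [hsa]
      by_cases h : (∑ i, b i) t = 0
      · rw [if_pos h, h, zero_pow (by omega : p - 1 ≠ 0), sub_zero]
      · rw [if_neg h, ZMod.pow_card_sub_one_eq_one h, sub_self]
    rw [Finset.prod_congr rfl (fun t _ => hfac t)]
    by_cases h : (∑ i, b i) = 0
    · rw [if_pos h]
      refine Finset.prod_eq_one fun t _ => ?_
      rw [if_pos (by rw [h]; rfl)]
    · rw [if_neg h]
      have : ∃ t, (∑ i, b i) t ≠ 0 := by
        by_contra hc
        push_neg at hc
        exact h (funext hc)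
      obtain ⟨t, ht⟩ := this
      exact Finset.prod_eq_zero (Finset.mem_univ t) (by rw [if_neg ht])
  -- total degree bounds
  have hQdeg : ∀ t : Fin n,
      (1 - (∑ i : Fin p, X (i, t)) ^ (p - 1) : MvPolynomial (Fin p × Fin n) (ZMod p)).totalDegree
        ≤ p - 1 := by
    intro t
    refine le_trans (totalDegree_sub _ _) ?_
    rw [totalDegree_one]
    refine max_le (Nat.zero_le _) ?_
    refine le_trans (totalDegree_pow _ _) ?_
    have h1 : (∑ i : Fin p, (X (i, t) : MvPolynomial (Fin p × Fin n) (ZMod p))).totalDegree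
        ≤ 1 := by
      refine le_trans (totalDegree_finset_sum _ _) ?_
      refine Finset.sup_le fun i _ => ?_
      rw [totalDegree_X]
    calc (p-1) * (∑ i : Fin p, (X (i, t) : MvPolynomial (Fin p × Fin n) (ZMod p))).totalDegree
        ≤ (p-1) * 1 := Nat.mul_le_mul_left _ h1
      _ = p - 1 := by ring
  set deg : Fin p → ((Fin p × Fin n) →₀ ℕ) → ℕ := fun i m => ∑ t, m (i, t) with hdeg
  have htot : ∀ m ∈ P.support, ∑ i : Fin p, deg i m ≤ (p-1) * n := by
    intro m hm
    have h1 : ∑ i : Fin p, deg i m = ∑ q : Fin p × Fin n, m q := by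
      rw [hdeg, Fintype.sum_prod_type]
    have h2 : ∑ q : Fin p × Fin n, m q = m.sum fun _ e => e := by
      rw [Finsupp.sum_fintype]
      intro q; rfl
    have h3 : (m.sum fun _ e => e) ≤ P.totalDegree := le_totalDegree hm
    have h4 : P.totalDegree ≤ (p-1) * n := by
      rw [hP]
      refine le_trans (totalDegree_finset_prod _ _) ?_
      calc ∑ t : Fin n, (1 - (∑ i : Fin p, X (i, t)) ^ (p - 1) :
            MvPolynomial (Fin p × Fin n) (ZMod p)).totalDegree
          ≤ ∑ _t : Fin n, (p-1) := Finset.sum_le_sum fun t _ => hQdeg t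
        _ = (p-1) * n := by rw [Finset.sum_const, Finset.card_univ, Fintype.card_fin,
              smul_eq_mul, mul_comm]
    omega
  -- per-variable bound
  have hvarsQ : ∀ t' : Fin n,
      (1 - (∑ j : Fin p, X (j, t')) ^ (p - 1) : MvPolynomial (Fin p × Fin n) (ZMod p)).vars
        ⊆ Finset.univ.image (fun j : Fin p => (j, t')) := by
    intro t'
    refine Finset.Subset.trans (vars_sub_subset _) ?_
    rw [vars_one]
    simp only [Finset.empty_union]
    refine Finset.Subset.trans (vars_pow _ _) ?_
    refine Finset.Subset.trans (vars_sum_subset _ _) ?_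
    intro q hq
    rw [Finset.mem_biUnion] at hq
    obtain ⟨j, -, hj⟩ := hq
    rw [vars_X, Finset.mem_singleton] at hj
    subst hj
    exact Finset.mem_image.mpr ⟨j, Finset.mem_univ _, rfl⟩
  have hvar : ∀ m ∈ P.support, ∀ q : Fin p × Fin n, m q ≤ p - 1 := by
    have main : ∀ s : Finset (Fin n), ∀ m ∈ (∏ t ∈ s,
        (1 - (∑ i : Fin p, X (i, t)) ^ (p - 1) :
          MvPolynomial (Fin p × Fin n) (ZMod p))).support,
        ∀ i : Fin p, ∀ t : Fin n, m (i, t) ≤ if t ∈ s then p - 1 else 0 := by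
      intro s
      induction s using Finset.induction_on with
      | empty =>
        intro m hm i t
        rw [Finset.prod_empty] at hm
        rw [MvPolynomial.mem_support_iff, MvPolynomial.coeff_one] at hm
        have hm0 : m = 0 := by
          by_contra hne
          exact hm (by rw [if_neg (fun hcc => hne hcc.symm)])
        simp [hm0]
      | @insert t₀ s ht₀ ih =>
        intro m hm i t
        rw [Finset.prod_insert ht₀] at hm
        have hsub := MvPolynomial.support_mul _ _ hm
        rw [Finset.mem_add] at hsub
        obtain ⟨m1, hm1, m2, hm2, rfl⟩ := hsub
        have h2 := ih m2 hm2 i t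
        have hm1b : ∀ t' : Fin n, m1 (i, t') ≤ if t' = t₀ then p - 1 else 0 := by
          intro t'
          by_cases ht' : t' = t₀
          · subst ht'
            rw [if_pos rfl]
            have hle : m1 (i, t') ≤ m1.sum fun _ e => e := by
              by_cases hmem : (i, t') ∈ m1.support
              · exact Finset.single_le_sum (fun _ _ => Nat.zero_le _) hmem
              · simp [Finsupp.notMem_support_iff.mp hmem]
            exact le_trans (le_trans hle (le_totalDegree hm1)) (hQdeg t')
          · rw [if_neg ht']
            by_contra hne
            have hmem : (i, t') ∈ m1.support := Finsupp.mem_support_iff.mpr (by omega)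
            have hv : (i, t') ∈ (1 - (∑ j : Fin p, X (j, t₀)) ^ (p - 1) :
                MvPolynomial (Fin p × Fin n) (ZMod p)).vars :=
              (mem_vars _).mpr ⟨m1, hm1, hmem⟩
            have := hvarsQ t₀ hv
            rw [Finset.mem_image] at this
            obtain ⟨j, -, hj⟩ := this
            exact ht' (congrArg Prod.snd hj).symm
        have h1 := hm1b t
        simp only [Finsupp.coe_add, Pi.add_apply]
        by_cases hts : t = t₀
        · subst hts
          rw [if_pos (Finset.mem_insert_self _ _)]
          rw [if_pos rfl] at h1
          rw [if_neg ht₀] at h2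
          omega
        · by_cases hts2 : t ∈ s
          · rw [if_pos (Finset.mem_insert_of_mem hts2)]
            rw [if_neg hts] at h1
            rw [if_pos hts2] at h2
            omega
          · rw [if_neg (by simp [hts, hts2])]
            rw [if_neg hts] at h1
            rw [if_neg hts2] at h2
            omega
    intro m hm q
    have hm' : m ∈ (∏ t ∈ Finset.univ,
        (1 - (∑ i : Fin p, X (i, t)) ^ (p - 1) :
          MvPolynomial (Fin p × Fin n) (ZMod p))).support := hm
    have := main Finset.univ m hm' q.1 q.2
    simpa using this
  -- select a block with small degree
  have hselex : ∀ m ∈ P.support,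
      (Finset.univ.filter (fun i : Fin p => p * deg i m ≤ (p-1)*n)).Nonempty := by
    intro m hm
    by_contra hc
    rw [Finset.not_nonempty_iff_eq_empty] at hc
    have hall : ∀ i : Fin p, (p-1)*n + 1 ≤ p * deg i m := by
      intro i
      by_contra hle
      push_neg at hle
      have hmem : i ∈ Finset.univ.filter (fun i : Fin p => p * deg i m ≤ (p-1)*n) :=
        Finset.mem_filter.mpr ⟨Finset.mem_univ _, by omega⟩
      rw [hc] at hmem
      exact absurd hmem (Finset.notMem_empty i)
    have c1 : p * ((p-1)*n) + p ≤ ∑ i : Fin p, p * deg i m := by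
      calc p * ((p-1)*n) + p = ∑ _i : Fin p, ((p-1)*n + 1) := by
            rw [Finset.sum_const, Finset.card_univ, Fintype.card_fin, smul_eq_mul]
            ring
        _ ≤ ∑ i : Fin p, p * deg i m := Finset.sum_le_sum fun i _ => hall i
    have c2 : ∑ i : Fin p, p * deg i m ≤ p * ((p-1)*n) := by
      rw [← Finset.mul_sum]
      exact Nat.mul_le_mul_left _ (htot m hm)
    have := le_trans c1 c2
    omega
  set sel : ((Fin p × Fin n) →₀ ℕ) → Fin p := fun m =>
    if h : (Finset.univ.filter (fun i : Fin p => p * deg i m ≤ (p-1)*n)).Nonempty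
    then (Finset.univ.filter (fun i : Fin p => p * deg i m ≤ (p-1)*n)).min' h
    else ⟨0, hp.pos⟩ with hsel
  have hselP : ∀ m ∈ P.support, p * deg (sel m) m ≤ (p-1)*n := by
    intro m hm
    rw [hsel]
    simp only [dif_pos (hselex m hm)]
    have := Finset.min'_mem _ (hselex m hm)
    exact (Finset.mem_filter.mp this).2
  set keyA : ((Fin p × Fin n) →₀ ℕ) → (Fin n → Fin p) :=
    fun m t => ⟨m (sel m, t) % p, Nat.mod_lt _ hp.pos⟩ with hkeyA
  have hkeyAval : ∀ m ∈ P.support, ∀ t, ((keyA m t : ℕ)) = m (sel m, t) := by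
    intro m hm t
    rw [hkeyA]
    exact Nat.mod_eq_of_lt (lt_of_le_of_lt (hvar m hm _) (by omega))
  have hkeyAB : ∀ m ∈ P.support, keyA m ∈ B := by
    intro m hm
    rw [hB, Finset.mem_filter]
    refine ⟨Finset.mem_univ _, ?_⟩
    have he : ∑ t, ((keyA m t : ℕ)) = deg (sel m) m :=
      Finset.sum_congr rfl fun t _ => hkeyAval m hm t
    rw [he]
    exact hselP m hm
  -- slice functions
  set f : Fin p → ↥B → (Fin n → ZMod p) → ZMod p :=
    fun _ a v => ∏ t, v t ^ ((a : Fin n → Fin p) t : ℕ) with hf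
  set g : Fin p → ↥B → (Fin p → (Fin n → ZMod p)) → ZMod p :=
    fun i a x => ∑ m ∈ P.support.filter (fun m => sel m = i ∧ keyA m = (a : Fin n → Fin p)),
      MvPolynomial.coeff m P * ∏ i' ∈ Finset.univ.erase i, ∏ t, x i' t ^ (m (i', t)) with hg
  have hginv : ∀ i a x v, g i a (Function.update x i v) = g i a x := by
    intro i a x v
    rw [hg]
    refine Finset.sum_congr rfl fun m _ => ?_
    congr 1
    refine Finset.prod_congr rfl fun i' hi' => ?_
    rw [Function.update_of_ne (Finset.ne_of_mem_erase hi')]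
  -- the sum of slices equals the evaluation of P
  have hsum_eq : ∀ x : Fin p → (Fin n → ZMod p),
      ∑ i, ∑ a : ↥B, f i a (x i) * g i a x
        = MvPolynomial.eval (fun q : Fin p × Fin n => x q.1 q.2) P := by
    intro x
    have hterm : ∀ (i : Fin p) (a : ↥B), f i a (x i) * g i a x
        = ∑ m ∈ P.support.filter (fun m => sel m = i ∧ keyA m = (a : Fin n → Fin p)),
            MvPolynomial.coeff m P * ∏ i', ∏ t, x i' t ^ (m (i', t)) := by
      intro i a
      rw [hf, hg, Finset.mul_sum]
      refine Finset.sum_congr rfl fun m hm => ?_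
      rw [Finset.mem_filter] at hm
      obtain ⟨hmP, hsel_m, hkey_m⟩ := hm
      have hfi : (∏ t, (x i) t ^ ((a : Fin n → Fin p) t : ℕ))
          = ∏ t, x i t ^ (m (i, t)) := by
        refine Finset.prod_congr rfl fun t _ => ?_
        rw [← hkey_m, hkeyAval m hmP t, hsel_m]
      beta_reduce
      rw [hfi, mul_left_comm]
      congr 1
      exact Finset.mul_prod_erase Finset.univ (fun i' => ∏ t, x i' t ^ (m (i', t))) (Finset.mem_univ i)
    have hfib := Finset.sum_fiberwise_of_maps_to (s := P.support) (t := Finset.univ ×ˢ B)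
      (g := fun m => (sel m, keyA m))
      (fun m hm => Finset.mem_product.mpr ⟨Finset.mem_univ _, hkeyAB m hm⟩)
      (fun m => MvPolynomial.coeff m P * ∏ i', ∏ t, x i' t ^ (m (i', t)))
    rw [Finset.sum_product] at hfib
    calc ∑ i, ∑ a : ↥B, f i a (x i) * g i a x
        = ∑ i, ∑ a : ↥B, ∑ m ∈ P.support.filter
            (fun m => sel m = i ∧ keyA m = (a : Fin n → Fin p)),
            MvPolynomial.coeff m P * ∏ i', ∏ t, x i' t ^ (m (i', t)) := by
          exact Finset.sum_congr rfl fun i _ => Finset.sum_congr rfl fun a _ => hterm i a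
      _ = ∑ i, ∑ b ∈ B, ∑ m ∈ P.support.filter
            (fun m => sel m = i ∧ keyA m = b),
            MvPolynomial.coeff m P * ∏ i', ∏ t, x i' t ^ (m (i', t)) := by
          refine Finset.sum_congr rfl fun i _ => ?_
          exact Finset.sum_coe_sort B (fun b => ∑ m ∈ P.support.filter
            (fun m => sel m = i ∧ keyA m = b),
            MvPolynomial.coeff m P * ∏ i', ∏ t, x i' t ^ (m (i', t)))
      _ = ∑ i, ∑ b ∈ B, ∑ m ∈ P.support.filter
            (fun m => (sel m, keyA m) = (i, b)),
            MvPolynomial.coeff m P * ∏ i', ∏ t, x i' t ^ (m (i', t)) := by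
          refine Finset.sum_congr rfl fun i _ => Finset.sum_congr rfl fun b _ => ?_
          refine Finset.sum_congr ?_ fun _ _ => rfl
          refine Finset.filter_congr fun m _ => ?_
          rw [Prod.mk.injEq]
      _ = ∑ m ∈ P.support,
            MvPolynomial.coeff m P * ∏ i', ∏ t, x i' t ^ (m (i', t)) := hfib
      _ = MvPolynomial.eval (fun q : Fin p × Fin n => x q.1 q.2) P := by
          rw [eval_eq']
          refine Finset.sum_congr rfl fun m _ => ?_
          congr 1
          rw [Fintype.prod_prod_type]
  -- the decomposition hypothesis for the diagonal tensor lemma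
  have hdecomp : ∀ x : Fin p → (Fin n → ZMod p), (∀ i, x i ∈ F) →
      (if ∀ i, x i = x (⟨0, hp.pos⟩ : Fin p) then
          (fun _ : Fin n → ZMod p => (1 : ZMod p)) (x ⟨0, hp.pos⟩) else 0)
        = ∑ i, ∑ a : ↥B, f i a (x i) * g i a x := by
    intro x hx
    rw [hsum_eq x, heval x]
    by_cases hall : ∀ i, x i = x (⟨0, hp.pos⟩ : Fin p)
    · rw [if_pos hall, if_pos]
      calc ∑ i, x i = ∑ _i : Fin p, x (⟨0, hp.pos⟩ : Fin p) :=
            Finset.sum_congr rfl fun i _ => hall i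
        _ = p • x (⟨0, hp.pos⟩ : Fin p) := by
            rw [Finset.sum_const, Finset.card_univ, Fintype.card_fin]
        _ = ((p : ZMod p)) • x (⟨0, hp.pos⟩ : Fin p) := (Nat.cast_smul_eq_nsmul _ _ _).symm
        _ = 0 := by rw [ZMod.natCast_self, zero_smul]
    · rw [if_neg hall, if_neg]
      push_neg at hall
      obtain ⟨i₀, hi₀⟩ := hall
      have hne : i₀ ≠ (⟨0, hp.pos⟩ : Fin p) := fun hcc => hi₀ (by rw [hcc])
      refine hF x hx ?_
      rcases lt_or_gt_of_ne hne with hlt | hgt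
      · exact ⟨i₀, ⟨0, hp.pos⟩, hlt, hi₀⟩
      · exact ⟨⟨0, hp.pos⟩, i₀, hgt, fun hcc => hi₀ hcc.symm⟩
  have happ := diag_tensor_bound p hp2 F (fun _ => (1 : ZMod p)) (fun a _ => one_ne_zero)
      (fun _ => ↥B) f g hginv ⟨0, hp.pos⟩ hdecomp
  calc F.card ≤ ∑ _i : Fin p, Fintype.card ↥B := happ
    _ = p * B.card := by
        rw [Finset.sum_const, Finset.card_univ, Fintype.card_fin, smul_eq_mul,
          Fintype.card_coe]


lemma B_card_bound (p n : ℕ) (hp2 : 2 ≤ p) :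
    ((Finset.univ.filter
        (fun a : Fin n → Fin p => p * (∑ t, (a t : ℕ)) ≤ (p-1) * n)).card : ℝ)
      ≤ (p:ℝ)^n * Real.exp (-((n:ℝ) * ((p:ℝ)-2)^2 / (2*(p:ℝ)^2))) := by
  classical
  set P : ℝ := (p : ℝ) with hPdef
  have hP2 : (2:ℝ) ≤ P := by rw [hPdef]; exact_mod_cast hp2
  have hP0 : 0 < P := by linarith
  have hP1 : 0 < P - 1 := by linarith
  set lam : ℝ := 2*(P-2)/(P*(P-1)) with hlam
  have hlam0 : 0 ≤ lam := by
    rw [hlam]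
    apply div_nonneg
    · linarith
    · positivity
  set mu : ℝ := (P-1)/2 with hmu
  have hvcast : ∀ v : Fin p, ((v:ℕ):ℝ) ≤ P - 1 := by
    intro v
    have h1 : (v:ℕ) ≤ p - 1 := Nat.le_sub_one_of_lt v.2
    have h2 := (Nat.cast_le (α := ℝ)).mpr h1
    rw [Nat.cast_sub (by omega)] at h2
    simpa [hPdef] using h2
  have hrevcast : ∀ v : Fin p, ((Fin.rev v : ℕ) : ℝ) = P - 1 - (v:ℕ) := by
    intro v
    rw [Fin.val_rev]
    have hv : (v:ℕ) + 1 ≤ p := v.2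
    push_cast [Nat.cast_sub hv]
    ring
  -- per-coordinate bound
  have hcoord : ∑ v : Fin p, Real.exp (-(lam * (v:ℕ)))
      ≤ P * Real.exp (lam^2*(P-1)^2/8 - lam*(P-1)/2) := by
    have hsplit : ∀ v : Fin p, Real.exp (-(lam * (v:ℕ)))
        = Real.exp (-(lam*mu)) * Real.exp (lam * (mu - (v:ℕ))) := by
      intro v
      rw [← Real.exp_add]
      congr 1
      ring
    have hrev : ∑ v : Fin p, Real.exp (lam * (mu - (v:ℕ)))
        = ∑ v : Fin p, Real.exp (-(lam * (mu - (v:ℕ)))) := by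
      refine Fintype.sum_bijective Fin.rev Fin.rev_bijective _ _ ?_
      intro v
      rw [hrevcast v]
      congr 1
      rw [hmu]
      ring
    have hcosh : ∑ v : Fin p, Real.exp (lam * (mu - (v:ℕ)))
        = ∑ v : Fin p, Real.cosh (lam * (mu - (v:ℕ))) := by
      have h2 : (2:ℝ) * ∑ v : Fin p, Real.exp (lam * (mu - (v:ℕ)))
          = ∑ v : Fin p, (Real.exp (lam * (mu - (v:ℕ)))
            + Real.exp (-(lam * (mu - (v:ℕ))))) := by
        rw [Finset.sum_add_distrib, ← hrev]
        ring
      have h3 : ∑ v : Fin p, Real.cosh (lam * (mu - (v:ℕ)))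
          = ∑ v : Fin p, (Real.exp (lam * (mu - (v:ℕ)))
            + Real.exp (-(lam * (mu - (v:ℕ))))) / 2 := by
        refine Finset.sum_congr rfl fun v _ => ?_
        rw [Real.cosh_eq]
      rw [h3, ← Finset.sum_div]
      rw [← h2]
      ring
    have hbound : ∀ v : Fin p, Real.cosh (lam * (mu - (v:ℕ)))
        ≤ Real.exp (lam^2*(P-1)^2/8) := by
      intro v
      refine le_trans (Real.cosh_le_exp_half_sq _) ?_
      apply Real.exp_le_exp.mpr
      have habs : (mu - (v:ℕ))^2 ≤ mu^2 := by
        have h1 : 0 ≤ (v:ℕ) := Nat.cast_nonneg _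
        have h2 := hvcast v
        have hmu2 : mu = (P-1)/2 := hmu
        nlinarith
      have h4 : (lam * (mu - (v:ℕ)))^2 = lam^2 * (mu - (v:ℕ))^2 := by ring
      rw [h4, hmu]
      rw [hmu] at habs
      nlinarith [sq_nonneg lam]
    calc ∑ v : Fin p, Real.exp (-(lam * (v:ℕ)))
        = Real.exp (-(lam*mu)) * ∑ v : Fin p, Real.exp (lam * (mu - (v:ℕ))) := by
          rw [Finset.mul_sum]
          exact Finset.sum_congr rfl fun v _ => hsplit v
      _ = Real.exp (-(lam*mu)) * ∑ v : Fin p, Real.cosh (lam * (mu - (v:ℕ))) := by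
          rw [hcosh]
      _ ≤ Real.exp (-(lam*mu)) * ∑ _v : Fin p, Real.exp (lam^2*(P-1)^2/8) := by
          refine mul_le_mul_of_nonneg_left ?_ (Real.exp_pos _).le
          exact Finset.sum_le_sum fun v _ => hbound v
      _ = P * Real.exp (lam^2*(P-1)^2/8 - lam*(P-1)/2) := by
          rw [Finset.sum_const, Finset.card_univ, Fintype.card_fin, nsmul_eq_mul]
          rw [show lam ^ 2 * (P - 1) ^ 2 / 8 - lam * (P - 1) / 2
              = -(lam*mu) + lam ^ 2 * (P - 1) ^ 2 / 8 from by rw [hmu]; ring]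
          rw [Real.exp_add, hPdef]
          ring
  -- main chain
  set B : Finset (Fin n → Fin p) :=
    Finset.univ.filter (fun a : Fin n → Fin p => p * (∑ t, (a t : ℕ)) ≤ (p-1) * n) with hB
  have hexp_nonneg : ∀ a ∈ B, (1:ℝ) ≤ Real.exp (lam * ((P-1)*n/P - ∑ t, ((a t : ℕ):ℝ))) := by
    intro a ha
    rw [hB, Finset.mem_filter] at ha
    have hsum : (p:ℝ) * (∑ t, ((a t : ℕ):ℝ)) ≤ (P-1) * n := by
      have := (Nat.cast_le (α := ℝ)).mpr ha.2
      push_cast [Nat.cast_sub (by omega : 1 ≤ p)] at this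
      simpa [hPdef] using this
    apply Real.one_le_exp
    apply mul_nonneg hlam0
    rw [sub_nonneg, le_div_iff₀ hP0]
    calc (∑ t, ((a t : ℕ):ℝ)) * P = P * (∑ t, ((a t : ℕ):ℝ)) := by ring
      _ ≤ (P-1) * n := by rw [hPdef] at *; exact hsum
  have hfactor : ∀ a : Fin n → Fin p,
      Real.exp (lam * ((P-1)*n/P - ∑ t, ((a t : ℕ):ℝ)))
        = Real.exp (lam * (P-1)*n/P) * ∏ t, Real.exp (-(lam * ((a t : ℕ):ℝ))) := by
    intro a
    rw [← Real.exp_sum, ← Real.exp_add]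
    congr 1
    have hns : ∑ t, -(lam * ((a t : ℕ):ℝ)) = -(lam * ∑ t, ((a t : ℕ):ℝ)) := by
      rw [Finset.mul_sum, ← Finset.sum_neg_distrib]
    rw [hns]
    ring
  have hBu : B ⊆ Finset.univ := Finset.subset_univ B
  calc (B.card : ℝ) = ∑ _a ∈ B, (1:ℝ) := by
        rw [Finset.sum_const, nsmul_eq_mul, mul_one]
    _ ≤ ∑ a ∈ B, Real.exp (lam * ((P-1)*n/P - ∑ t, ((a t : ℕ):ℝ))) :=
        Finset.sum_le_sum hexp_nonneg
    _ ≤ ∑ a : Fin n → Fin p, Real.exp (lam * ((P-1)*n/P - ∑ t, ((a t : ℕ):ℝ))) :=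
        Finset.sum_le_sum_of_subset_of_nonneg hBu (fun _ _ _ => (Real.exp_pos _).le)
    _ = Real.exp (lam*(P-1)*n/P) *
          ∑ a : Fin n → Fin p, ∏ t, Real.exp (-(lam * ((a t : ℕ):ℝ))) := by
        rw [Finset.mul_sum]
        exact Finset.sum_congr rfl fun a _ => hfactor a
    _ = Real.exp (lam*(P-1)*n/P) *
          (∑ v : Fin p, Real.exp (-(lam * ((v : ℕ):ℝ))))^n := by
        congr 1
        rw [Finset.sum_pow' Finset.univ (fun v : Fin p => Real.exp (-(lam * ((v:ℕ):ℝ)))) n,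
          Fintype.piFinset_univ]
    _ ≤ Real.exp (lam*(P-1)*n/P) *
          (P * Real.exp (lam^2*(P-1)^2/8 - lam*(P-1)/2))^n := by
        refine mul_le_mul_of_nonneg_left ?_ (Real.exp_pos _).le
        refine pow_le_pow_left₀ ?_ hcoord n
        exact Finset.sum_nonneg fun v _ => (Real.exp_pos _).le
    _ = (p:ℝ)^n * Real.exp (-((n:ℝ) * ((p:ℝ)-2)^2 / (2*(p:ℝ)^2))) := by
        rw [mul_pow, ← Real.exp_nat_mul, ← hPdef, mul_left_comm, ← Real.exp_add]
        congr 1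
        rw [hlam]
        have hne1 : P ≠ 0 := ne_of_gt hP0
        have hne2 : P - 1 ≠ 0 := ne_of_gt hP1
        field_simp
        ring


end ZeroSumFreeAux

theorem zero_sum_free_bound (p : ℕ) (hp : p.Prime) (r : ℕ) (hr : 2 ≤ r) (hpr : p ∣ r)
    (n : ℕ) (F : Finset (Fin n → ZMod p))
    (hF : ∀ b : Fin r → (Fin n → ZMod p), (∀ i, b i ∈ F) →
      (∃ i j : Fin r, i < j ∧ b i ≠ b j) → ∑ i, b i ≠ 0) :
    (F.card : ℝ) ≤
      r * (p : ℝ) ^ ((1 - ((r : ℝ) - 2) ^ 2 / (2 * (r : ℝ) ^ 2 * Real.log p)) * n) := by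
  classical
  have hp2 : 2 ≤ p := hp.two_le
  have hppos : (0:ℝ) < (p:ℝ) := by positivity
  have hp1R : (1:ℝ) < (p:ℝ) := by exact_mod_cast hp.one_lt
  have hlogpos : 0 < Real.log p := Real.log_pos hp1R
  have hlog2 : Real.log 2 ≤ Real.log p := by
    apply Real.log_le_log (by norm_num)
    exact_mod_cast hp2
  -- nonnegativity of the exponent
  have hexp0 : 0 ≤ 1 - ((r : ℝ) - 2) ^ 2 / (2 * (r : ℝ) ^ 2 * Real.log p) := by
    have hrR : (2:ℝ) ≤ (r:ℝ) := by exact_mod_cast hr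
    have hden : 0 < 2 * (r : ℝ) ^ 2 * Real.log p := by positivity
    rw [sub_nonneg, div_le_one hden]
    nlinarith [Real.log_two_gt_d9, hlog2, sq_nonneg ((r:ℝ) - 2)]
  have hone_le : (1:ℝ) ≤ (p:ℝ) ^ ((1 - ((r : ℝ) - 2) ^ 2 / (2 * (r : ℝ) ^ 2 * Real.log p)) * n) := by
    have h0 : (p:ℝ) ^ (0:ℝ) ≤ (p:ℝ) ^ ((1 - ((r : ℝ) - 2) ^ 2 / (2 * (r : ℝ) ^ 2 * Real.log p)) * n) :=
      Real.rpow_le_rpow_of_exponent_le (le_of_lt hp1R) (mul_nonneg hexp0 (Nat.cast_nonneg n))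
    rwa [Real.rpow_zero] at h0
  have hfinal1 : (1:ℝ) ≤ r * (p : ℝ) ^ ((1 - ((r : ℝ) - 2) ^ 2 / (2 * (r : ℝ) ^ 2 * Real.log p)) * n) := by
    have hrR : (1:ℝ) ≤ (r:ℝ) := by
      have : (1:ℕ) ≤ r := by omega
      exact_mod_cast this
    have hmm := mul_le_mul hrR hone_le (by norm_num) (le_trans zero_le_one hrR)
    simpa using hmm
  obtain ⟨k, rfl⟩ := hpr
  have hk1 : k = 1 ∨ 2 ≤ k := by
    rcases Nat.eq_zero_or_pos k with rfl | hkpos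
    · omega
    · omega
  rcases hk1 with rfl | hk2
  · -- the main case r = p
    simp only [mul_one] at hr hexp0 hone_le ⊢
    have hF' : ∀ b : Fin p → (Fin n → ZMod p), (∀ i, b i ∈ F) →
        (∃ i j : Fin p, i < j ∧ b i ≠ b j) → ∑ i, b i ≠ 0 := by
      intro b hb hex hsum
      refine hF (fun i => b (finCongr (mul_one p) i)) (fun i => hb _) ?_ ?_
      · obtain ⟨i, j, hij, hne⟩ := hex
        have hvi : (i:ℕ) < p * 1 := by have := i.2; omega
        have hvj : (j:ℕ) < p * 1 := by have := j.2; omega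
        refine ⟨⟨(i:ℕ), hvi⟩, ⟨(j:ℕ), hvj⟩, Fin.mk_lt_mk.mpr (Fin.lt_def.mp hij), ?_⟩
        have e1 : finCongr (mul_one p) ⟨(i:ℕ), hvi⟩ = i := by
          apply Fin.ext
          simp
        have e2 : finCongr (mul_one p) ⟨(j:ℕ), hvj⟩ = j := by
          apply Fin.ext
          simp
        simpa only [e1, e2] using hne
      · rw [Equiv.sum_comp (finCongr (mul_one p)) b]
        exact hsum
    have h1 := card_le_p_mul p hp n F hF'
    have h2 := B_card_bound p n hp2
    have hstep : (F.card : ℝ) ≤ (p:ℝ) * ((p:ℝ)^n * Real.exp (-((n:ℝ) * ((p:ℝ)-2)^2 / (2*(p:ℝ)^2)))) := by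
      calc (F.card : ℝ) ≤ (p:ℝ) * ((Finset.univ.filter
            (fun a : Fin n → Fin p => p * (∑ t, (a t : ℕ)) ≤ (p-1) * n)).card : ℝ) := by
            exact_mod_cast h1
        _ ≤ _ := by
            apply mul_le_mul_of_nonneg_left h2 (le_of_lt hppos)
    refine le_trans hstep ?_
    apply mul_le_mul_of_nonneg_left _ (le_of_lt hppos)
    -- equality of the two expressions
    have hrw : (p:ℝ) ^ ((1 - ((p : ℝ) - 2) ^ 2 / (2 * (p : ℝ) ^ 2 * Real.log p)) * n)
        = (p:ℝ)^n * Real.exp (-((n:ℝ) * ((p:ℝ)-2)^2 / (2*(p:ℝ)^2))) := by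
      rw [Real.rpow_def_of_pos hppos]
      have hpn : (p:ℝ)^n = Real.exp ((n:ℝ) * Real.log p) := by
        rw [Real.exp_nat_mul, Real.exp_log hppos]
      rw [hpn, ← Real.exp_add]
      congr 1
      have hlogne : Real.log p ≠ 0 := ne_of_gt hlogpos
      field_simp
      ring
    rw [hrw]
  · -- here F has at most one element
    have hcard1 : F.card ≤ 1 := by
      by_contra hcc
      push_neg at hcc
      obtain ⟨a, ha, c, hc, hac⟩ := Finset.one_lt_card.mp hcc
      set m := p * k with hm
      have hpm : p < m := by
        have : p * 2 ≤ p * k := Nat.mul_le_mul_left p hk2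
        omega
      set b : Fin m → (Fin n → ZMod p) := fun i => if (i:ℕ) < p then a else c with hb
      have hmem : ∀ i, b i ∈ F := by
        intro i
        simp only [hb]
        by_cases hi : (i:ℕ) < p
        · rw [if_pos hi]; exact ha
        · rw [if_neg hi]; exact hc
      have hpair : ∃ i j : Fin m, i < j ∧ b i ≠ b j := by
        refine ⟨⟨0, by omega⟩, ⟨p, hpm⟩, ?_, ?_⟩
        · exact Fin.mk_lt_mk.mpr (by omega)
        · simp only [hb]
          rw [if_pos (by simp [hp.pos]), if_neg (by simp)]
          exact hac
      have hzero : ∑ i, b i = 0 := by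
        have hsum : ∑ i : Fin m, b i = ∑ i ∈ Finset.range m,
            (if i < p then a else c) := by
          exact Fin.sum_univ_eq_sum_range (fun i => if i < p then a else c) m
        rw [hsum, ← Finset.sum_range_add_sum_Ico _ (le_of_lt hpm)]
        have hA : ∑ i ∈ Finset.range p, (if i < p then a else c) = p • a := by
          rw [Finset.sum_congr rfl (fun i hi => if_pos (Finset.mem_range.mp hi)),
            Finset.sum_const, Finset.card_range]
        have hC : ∑ i ∈ Finset.Ico p m, (if i < p then a else c) = (m - p) • c := by
          rw [Finset.sum_congr rfl
            (fun i hi => if_neg (by have := (Finset.mem_Ico.mp hi).1; omega)),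
            Finset.sum_const, Nat.card_Ico]
        rw [hA, hC]
        have hA0 : p • a = 0 := by
          rw [← Nat.cast_smul_eq_nsmul (ZMod p), ZMod.natCast_self, zero_smul]
        have hC0 : (m - p) • c = 0 := by
          rw [← Nat.cast_smul_eq_nsmul (ZMod p)]
          have hmp0 : ((m - p : ℕ) : ZMod p) = 0 := by
            rw [ZMod.natCast_eq_zero_iff]
            exact Nat.dvd_sub (dvd_mul_right p k) dvd_rfl
          rw [hmp0, zero_smul]
        rw [hA0, hC0, add_zero]
      exact hF b hmem hpair hzero
    have hle1 : (F.card : ℝ) ≤ 1 := by exact_mod_cast hcard1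
    exact le_trans hle1 hfinal1
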